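/- Let p be an odd prime, t ≥ 1, m = p^t + (p^t+1)/2. Suppose (p^t+1)/2 ≤ k ≤ (p^t+1)/2 + p^{t−1} − 1 and j ≥ 0 is an integer with k + j·p^{t−1} ≤ p^t − 1. Then ν_p(C(2m−k−1, k)) = ν_p(C(2m−(k+j p^{t−1})−1, k+j p^{t−1})) and ν_p(C(2m−2k−2, m−k−1)) = ν_p(C(2m−2(k+j p^{t−1})−2, m−(k+j p^{t−1})−1)). -/

import Mathlib

private lemma pv_choose {p n k b : ℕ} (hp : p.Prime) (hkn : k ≤ n) (hnb : Nat.log p n < b) :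
    padicValNat p (n.choose k) =
      ((Finset.Ico 1 b).filter fun i => p ^ i ≤ k % p ^ i + (n - k) % p ^ i).card := by
  haveI : Fact p.Prime := ⟨hp⟩
  have h := padicValNat_eq_emultiplicity (p := p) (Nat.choose_pos hkn).ne'
  rw [Nat.Prime.emultiplicity_choose hp hkn hnb] at h
  exact_mod_cast h

private lemma main_aux {p t : ℕ} (hp : p.Prime) (hodd : Odd p) (ht : 1 ≤ t)
    {s m k k' : ℕ} (hs : 2 * s = p ^ t + 1) (hm : m = p ^ t + s)
    (hk : s ≤ k) (hkk' : k ≤ k') (hk' : k' ≤ p ^ t - 1) (hdvd : p ^ (t - 1) ∣ k' - k) :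
    padicValNat p ((2 * m - k - 1).choose k) = padicValNat p ((2 * m - k' - 1).choose k') ∧
      padicValNat p ((2 * m - 2 * k - 2).choose (m - k - 1)) =
        padicValNat p ((2 * m - 2 * k' - 2).choose (m - k' - 1)) := by
  have hp3 : 3 ≤ p := by
    have h2 : p ≠ 2 := by rintro rfl; rw [Nat.odd_iff] at hodd; omega
    have := hp.two_le; omega
  have hN1 : 1 ≤ p ^ t := Nat.one_le_pow _ _ hp.pos
  have hNp : 3 * p ^ t ≤ p ^ (t + 1) := by
    exact le_of_le_of_eq (Nat.mul_le_mul_right _ hp3) (pow_succ' p t).symm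
  have hkN : k ≤ p ^ t - 1 := hkk'.trans hk'
  -- abbreviations
  set N := p ^ t with hN
  have g1 : 2 * m - k - 1 = 3 * N - k := by omega
  have g1' : 2 * m - k' - 1 = 3 * N - k' := by omega
  have g2 : 2 * m - 2 * k - 2 = 2 * (N + s - 1 - k) := by omega
  have g2' : 2 * m - 2 * k' - 2 = 2 * (N + s - 1 - k') := by omega
  have g3 : m - k - 1 = N + s - 1 - k := by omega
  have g3' : m - k' - 1 = N + s - 1 - k' := by omega
  set a := N + s - 1 - k with ha
  set a' := N + s - 1 - k' with ha'
  rw [g1, g1', g2, g2', g3, g3']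
  have hlog1 : Nat.log p (3 * N - k) < t + 1 := by
    exact Nat.log_lt_of_lt_pow (by omega) (by omega)
  have hlog1' : Nat.log p (3 * N - k') < t + 1 := by
    exact Nat.log_lt_of_lt_pow (by omega) (by omega)
  have hlog2 : Nat.log p (2 * a) < t + 1 := by
    exact Nat.log_lt_of_lt_pow (by omega) (by omega)
  have hlog2' : Nat.log p (2 * a') < t + 1 := by
    exact Nat.log_lt_of_lt_pow (by omega) (by omega)
  rw [pv_choose hp (by omega) hlog1, pv_choose hp (by omega) hlog1',
    pv_choose hp (by omega : a ≤ 2 * a) hlog2, pv_choose hp (by omega : a' ≤ 2 * a') hlog2']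
  constructor
  · congr 1
    apply Finset.filter_congr
    intro i hi
    simp only [Finset.mem_Ico] at hi
    rcases Nat.lt_or_ge i t with hit | hit
    · -- i ≤ t - 1 : congruences mod p^i
      have hd : p ^ i ∣ k' - k := (pow_dvd_pow p (by omega : i ≤ t - 1)).trans hdvd
      obtain ⟨c, hc⟩ := hd
      have hXY : p ^ i * (2 * c) = 2 * (p ^ i * c) := by ring
      have e1 : k' = k + p ^ i * c := by omega
      have e2 : 3 * N - k - k = (3 * N - k' - k') + p ^ i * (2 * c) := by omega
      have m1 : k' % p ^ i = k % p ^ i := by rw [e1, Nat.add_mul_mod_self_left]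
      have m2 : (3 * N - k - k) % p ^ i = (3 * N - k' - k') % p ^ i := by
        rw [e2, Nat.add_mul_mod_self_left]
      rw [m1, m2]
    · -- i = t : carry always happens
      have hit' : i = t := by omega
      rw [hit']
      have hκ : k % p ^ t = k := Nat.mod_eq_of_lt (by omega)
      have hκ' : k' % p ^ t = k' := Nat.mod_eq_of_lt (by omega)
      have e : 3 * N - k - k = p ^ t + (2 * N - 2 * k) := by omega
      have e' : 3 * N - k' - k' = p ^ t + (2 * N - 2 * k') := by omega
      rw [e, e', Nat.add_mod_left, Nat.add_mod_left, hκ, hκ',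
        Nat.mod_eq_of_lt (by omega : 2 * N - 2 * k < p ^ t),
        Nat.mod_eq_of_lt (by omega : 2 * N - 2 * k' < p ^ t)]
      constructor <;> intro <;> omega
  · congr 1
    apply Finset.filter_congr
    intro i hi
    simp only [Finset.mem_Ico] at hi
    have h2a : 2 * a - a = a := by omega
    have h2a' : 2 * a' - a' = a' := by omega
    rw [h2a, h2a']
    rcases Nat.lt_or_ge i t with hit | hit
    · have hd : p ^ i ∣ k' - k := (pow_dvd_pow p (by omega : i ≤ t - 1)).trans hdvd
      obtain ⟨c, hc⟩ := hd
      have e1 : a = a' + p ^ i * c := by omega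
      have m1 : a % p ^ i = a' % p ^ i := by rw [e1, Nat.add_mul_mod_self_left]
      rw [m1]
    · have hit' : i = t := by omega
      rw [hit']
      rw [Nat.mod_eq_of_lt (by omega : a < p ^ t), Nat.mod_eq_of_lt (by omega : a' < p ^ t)]
      constructor <;> intro <;> omega

theorem stmt_8 {p t m : ℕ} (hp : p.Prime) (hodd : Odd p) (ht : 1 ≤ t)
    (hm : m = p ^ t + (p ^ t + 1) / 2) :
    ∀ k j, (p ^ t + 1) / 2 ≤ k → k ≤ (p ^ t + 1) / 2 + p ^ (t - 1) - 1 →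
      k + j * p ^ (t - 1) ≤ p ^ t - 1 →
      padicValNat p ((2 * m - k - 1).choose k) =
        padicValNat p ((2 * m - (k + j * p ^ (t - 1)) - 1).choose (k + j * p ^ (t - 1))) ∧
      padicValNat p ((2 * m - 2 * k - 2).choose (m - k - 1)) =
        padicValNat p
          ((2 * m - 2 * (k + j * p ^ (t - 1)) - 2).choose (m - (k + j * p ^ (t - 1)) - 1)) := by
  intro k j hk1 hk2 hkj
  have hNodd : Odd (p ^ t) := hodd.pow
  have hs : 2 * ((p ^ t + 1) / 2) = p ^ t + 1 := by
    rw [Nat.odd_iff] at hNodd; omega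
  exact main_aux hp hodd ht hs hm hk1 (Nat.le_add_right _ _) hkj
    (by simp)
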